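/- arXiv:2203.01635 — 4 statements merged into one kernel-verified Lean document; each statement's English description precedes it below -/
import Mathlib

section
/- Let A be a symmetric invertible n×n real matrix, v ∈ ℝⁿ, u ∈ ℝ, and B = [[A, v],[vᵀ, u]]. Let a_1,…,a_C ∈ ℝⁿ and b_1,…,b_C ∈ ℝ, and define t_R = Σ_{i=1}^C a_iᵀ A⁻¹ a_i and t_{R,f} = Σ_{i=1}^C (a_i; b_i)ᵀ B⁻¹ (a_i; b_i), where (a_i; b_i) ∈ ℝ^{n+1} is a_i with b_i appended. If u − vᵀ A⁻¹ v > 0, then t_{R,f} ≥ t_R. -/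
open Matrix

theorem trace_criterion_increase_of_schur_pos (n C : ℕ)
    (A : Matrix (Fin n) (Fin n) ℝ) (hAsymm : A.IsSymm) (hA : IsUnit A.det)
    (v : Fin n → ℝ) (u : ℝ)
    (B : Matrix (Fin n ⊕ Unit) (Fin n ⊕ Unit) ℝ)
    (hB : B = fromBlocks A (replicateCol Unit v) (replicateRow Unit v) (of fun _ _ => u))
    (a : Fin C → (Fin n → ℝ)) (b : Fin C → ℝ)
    (tR tRf : ℝ)
    (htR : tR = ∑ i, a i ⬝ᵥ (A⁻¹ *ᵥ a i))
    (htRf : tRf = ∑ i, (Sum.elim (a i) (fun _ => b i)) ⬝ᵥ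
        (B⁻¹ *ᵥ (Sum.elim (a i) (fun _ => b i))))
    (hschur : 0 < u - v ⬝ᵥ (A⁻¹ *ᵥ v)) :
    tR ≤ tRf := by
  subst hB
  haveI invA : Invertible A := A.invertibleOfIsUnitDet hA
  have hAinv : (⅟A : Matrix (Fin n) (Fin n) ℝ) = A⁻¹ := invOf_eq_nonsing_inv A
  set w : Fin n → ℝ := A⁻¹ *ᵥ v with hw
  set s : ℝ := u - v ⬝ᵥ w with hs
  have hs0 : s ≠ 0 := ne_of_gt hschur
  -- the Schur complement is the 1×1 matrix with entry s
  have h2 : (v ᵥ* A⁻¹) ⬝ᵥ v = v ⬝ᵥ w := (dotProduct_mulVec v A⁻¹ v).symm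
  have hSval : ((of fun _ _ => u) - replicateRow Unit v * ⅟A * replicateCol Unit v : Matrix Unit Unit ℝ)
      = of fun _ _ => s := by
    rw [hAinv, ← replicateRow_vecMul, replicateRow_mul_replicateCol]
    ext i j
    simp [hs, h2]
  haveI invS : Invertible ((of fun _ _ => u) - replicateRow Unit v * ⅟A * replicateCol Unit v :
      Matrix Unit Unit ℝ) := by
    apply Matrix.invertibleOfIsUnitDet
    rw [Matrix.det_unique, hSval]
    simpa using isUnit_iff_ne_zero.mpr hs0
  have hSinv : (⅟((of fun _ _ => u) - replicateRow Unit v * ⅟A * replicateCol Unit v) : Matrix Unit Unit ℝ)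
      = of fun _ _ => s⁻¹ := by
    apply invOf_eq_right_inv
    rw [hSval]
    ext i j
    simp [Matrix.mul_apply, mul_inv_cancel₀ hs0, Matrix.one_apply]
  haveI invB : Invertible (fromBlocks A (replicateCol Unit v) (replicateRow Unit v)
      (of fun _ _ => u) : Matrix (Fin n ⊕ Unit) (Fin n ⊕ Unit) ℝ) :=
    fromBlocks₁₁Invertible A _ _ _
  -- auxiliary facts
  have hAcol : A⁻¹ * replicateCol Unit v = replicateCol Unit w := (replicateCol_mulVec _ _).symm
  have hArow : replicateRow Unit v * A⁻¹ = replicateRow Unit w := by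
    have h1 : v ᵥ* A⁻¹ = w := by
      rw [← Matrix.mulVec_transpose, Matrix.transpose_nonsing_inv, hAsymm.eq]
    rw [← replicateRow_vecMul, h1]
  have hBinv : (fromBlocks A (replicateCol Unit v) (replicateRow Unit v)
        (of fun _ _ => u) : Matrix (Fin n ⊕ Unit) (Fin n ⊕ Unit) ℝ)⁻¹
      = fromBlocks (A⁻¹ + replicateCol Unit w * (of fun _ _ => s⁻¹ : Matrix Unit Unit ℝ) * replicateRow Unit w)
          (-(replicateCol Unit w * (of fun _ _ => s⁻¹ : Matrix Unit Unit ℝ)))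
          (-((of fun _ _ => s⁻¹ : Matrix Unit Unit ℝ) * replicateRow Unit w)) (of fun _ _ => s⁻¹) := by
    rw [← invOf_eq_nonsing_inv, invOf_fromBlocks₁₁_eq, hSinv, hAinv, hAcol]
    rw [Matrix.mul_assoc (replicateCol Unit w * (of fun _ _ => s⁻¹)) (replicateRow Unit v) A⁻¹, hArow]
    rw [Matrix.mul_assoc (of fun _ _ => s⁻¹ : Matrix Unit Unit ℝ) (replicateRow Unit v) A⁻¹, hArow]
  rw [htR, htRf, hBinv]
  apply Finset.sum_le_sum
  intro i _
  rw [fromBlocks_mulVec]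
  simp only [Sum.elim_comp_inl, Sum.elim_comp_inr]
  rw [sumElim_dotProduct_sumElim]
  set p : ℝ := w ⬝ᵥ a i with hp
  have htop : (A⁻¹ + replicateCol Unit w * (of fun _ _ => s⁻¹ : Matrix Unit Unit ℝ) * replicateRow Unit w) *ᵥ a i
        + (-(replicateCol Unit w * (of fun _ _ => s⁻¹ : Matrix Unit Unit ℝ))) *ᵥ (fun _ => b i : Unit → ℝ)
      = A⁻¹ *ᵥ a i + (s⁻¹ * p) • w - (s⁻¹ * b i) • w := by
    ext j
    simp only [Matrix.add_mulVec, Matrix.neg_mulVec, Pi.add_apply, Pi.sub_apply, Pi.neg_apply,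
      Matrix.mulVec, dotProduct, Matrix.mul_apply, Matrix.replicateCol_apply, Matrix.replicateRow_apply,
      Matrix.of_apply, Finset.univ_unique, Finset.sum_singleton, Pi.smul_apply, smul_eq_mul,
      Matrix.add_apply, hp, add_mul, Finset.sum_add_distrib, Finset.mul_sum]
    ring_nf
    congr 1
    rw [Finset.mul_sum]
    apply Finset.sum_congr rfl
    intros
    ring
  have hbot : (-((of fun _ _ => s⁻¹ : Matrix Unit Unit ℝ) * replicateRow Unit w)) *ᵥ a i
        + (of fun _ _ => s⁻¹ : Matrix Unit Unit ℝ) *ᵥ (fun _ => b i : Unit → ℝ)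
      = fun _ => s⁻¹ * b i - s⁻¹ * p := by
    ext j
    simp only [Matrix.add_mulVec, Matrix.neg_mulVec, Pi.add_apply, Pi.neg_apply,
      Matrix.mulVec, dotProduct, Matrix.mul_apply, Matrix.replicateRow_apply, Matrix.of_apply,
      Finset.univ_unique, Finset.sum_singleton, hp, Finset.mul_sum]
    ring_nf
  rw [htop, hbot]
  have haw : a i ⬝ᵥ w = p := dotProduct_comm _ _
  rw [dotProduct_sub, dotProduct_add, dotProduct_smul, dotProduct_smul, haw]
  have hdb : (fun (_ : Unit) => b i) ⬝ᵥ (fun _ => s⁻¹ * b i - s⁻¹ * p)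
      = b i * (s⁻¹ * b i - s⁻¹ * p) := by
    simp [dotProduct]
  rw [hdb]
  have hsinv : 0 < s⁻¹ := inv_pos.mpr hschur
  have key : 0 ≤ s⁻¹ * (p - b i) ^ 2 := mul_nonneg hsinv.le (sq_nonneg _)
  simp only [smul_eq_mul]
  nlinarith [key]
end

section
/- Let A be a symmetric invertible n×n real matrix, v ∈ ℝⁿ, u ∈ ℝ, and B = [[A, v],[vᵀ, u]]. Let a_1,…,a_C ∈ ℝⁿ and b_1,…,b_C ∈ ℝ, and define t_R = Σ_{i=1}^C a_iᵀ A⁻¹ a_i and t_{R,f} = Σ_{i=1}^C (a_i; b_i)ᵀ B⁻¹ (a_i; b_i), where (a_i; b_i) ∈ ℝ^{n+1} is a_i with b_i appended. If u − vᵀ A⁻¹ v < 0, then t_{R,f} ≤ t_R; moreover, if in addition there exists an index i with a_iᵀ A⁻¹ v ≠ b_i, then t_{R,f} < t_R. -/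
open Matrix

theorem trace_criterion_decrease_of_schur_neg (n C : ℕ)
    (A : Matrix (Fin n) (Fin n) ℝ) (hAsymm : A.IsSymm) (hA : IsUnit A.det)
    (v : Fin n → ℝ) (u : ℝ)
    (B : Matrix (Fin n ⊕ Unit) (Fin n ⊕ Unit) ℝ)
    (hB : B = fromBlocks A (replicateCol Unit v) (replicateRow Unit v) (of fun _ _ => u))
    (a : Fin C → (Fin n → ℝ)) (b : Fin C → ℝ)
    (tR tRf : ℝ)
    (htR : tR = ∑ i, a i ⬝ᵥ (A⁻¹ *ᵥ a i))
    (htRf : tRf = ∑ i, (Sum.elim (a i) (fun _ => b i)) ⬝ᵥ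
        (B⁻¹ *ᵥ (Sum.elim (a i) (fun _ => b i))))
    (hschur : u - v ⬝ᵥ (A⁻¹ *ᵥ v) < 0) :
    tRf ≤ tR ∧ ((∃ i, a i ⬝ᵥ (A⁻¹ *ᵥ v) ≠ b i) → tRf < tR) := by
  haveI := A.invertibleOfIsUnitDet hA
  set s : ℝ := u - v ⬝ᵥ (A⁻¹ *ᵥ v) with hs
  have hs0 : s ≠ 0 := ne_of_lt hschur
  -- the Schur complement as a 1×1 matrix
  have hschurMat :
      (of fun _ _ => u : Matrix Unit Unit ℝ) - replicateRow Unit v * ⅟A * replicateCol Unit v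
        = of fun _ _ => s := by
    ext i j
    simp only [invOf_eq_nonsing_inv, Matrix.sub_apply, of_apply, mul_apply, replicateRow_apply, replicateCol_apply,
      Finset.sum_mul]
    rw [hs]
    congr 1
    simp only [dotProduct, mulVec, dotProduct]
    rw [Finset.sum_comm]
    apply Finset.sum_congr rfl
    intro k _
    simp [mul_assoc, Finset.mul_sum]
  -- B is invertible
  have hBdet : IsUnit B.det := by
    rw [hB, det_fromBlocks₁₁, hschurMat]
    exact hA.mul (by simpa [det_unique, isUnit_iff_ne_zero] using hs0)
  -- symmetry of A⁻¹
  have hAinvT : (A⁻¹)ᵀ = A⁻¹ := by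
    rw [Matrix.transpose_nonsing_inv, hAsymm.eq]
  have hsymm : ∀ x : Fin n → ℝ, x ⬝ᵥ (A⁻¹ *ᵥ v) = v ⬝ᵥ (A⁻¹ *ᵥ x) := by
    intro x
    rw [dotProduct_mulVec, ← mulVec_transpose, dotProduct_comm, hAinvT]
  -- key identity for the quadratic form
  have key : ∀ (x : Fin n → ℝ) (y : ℝ),
      (Sum.elim x (fun _ => y)) ⬝ᵥ (B⁻¹ *ᵥ (Sum.elim x (fun _ => y)))
        = x ⬝ᵥ (A⁻¹ *ᵥ x) + s⁻¹ * (x ⬝ᵥ (A⁻¹ *ᵥ v) - y)^2 := by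
    intro x y
    set c : ℝ := x ⬝ᵥ (A⁻¹ *ᵥ v) with hc
    set z : ℝ := s⁻¹ * (y - c) with hz
    set w : Fin n ⊕ Unit → ℝ := Sum.elim (A⁻¹ *ᵥ x - z • (A⁻¹ *ᵥ v)) (fun _ => z) with hw
    have hBw : B *ᵥ w = Sum.elim x (fun _ => y) := by
      rw [hB, hw, fromBlocks_mulVec]
      have h1 : A *ᵥ (A⁻¹ *ᵥ x - z • (A⁻¹ *ᵥ v)) = x - z • v := by
        rw [Matrix.mulVec_sub, Matrix.mulVec_smul]
        simp [Matrix.mulVec_mulVec, Matrix.mul_nonsing_inv _ hA]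
      have hc' : v ⬝ᵥ (A⁻¹ *ᵥ x) = c := (hsymm x).symm
      funext i
      cases i with
      | inl i =>
        simp only [Sum.elim_comp_inl, Sum.elim_comp_inr, Sum.elim_inl, Pi.add_apply, h1]
        have h2 : (replicateCol Unit v *ᵥ fun _ => z) i = v i * z := by
          simp [mulVec, dotProduct]
        rw [h2]
        simp only [Pi.sub_apply, Pi.smul_apply, smul_eq_mul]
        ring
      | inr i =>
        simp only [Sum.elim_comp_inl, Sum.elim_comp_inr, Sum.elim_inr, Pi.add_apply]
        have h3 : (replicateRow Unit v *ᵥ (A⁻¹ *ᵥ x - z • (A⁻¹ *ᵥ v))) i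
            = v ⬝ᵥ (A⁻¹ *ᵥ x - z • (A⁻¹ *ᵥ v)) := by
          simp [mulVec, dotProduct]
        have h4 : ((of fun _ _ => u : Matrix Unit Unit ℝ) *ᵥ fun _ => z) i = u * z := by
          simp [mulVec, dotProduct]
        rw [h3, h4, dotProduct_sub, dotProduct_smul, smul_eq_mul, hc']
        have h5 : z * s = y - c := by
          rw [hz]; field_simp
        have h6 : z * s = z * u - z * (v ⬝ᵥ (A⁻¹ *ᵥ v)) := by rw [hs]; ring
        linear_combination h5 - h6
    have hinv : B⁻¹ *ᵥ (Sum.elim x (fun _ => y)) = w := by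
      rw [← hBw, Matrix.mulVec_mulVec, Matrix.nonsing_inv_mul _ hBdet, Matrix.one_mulVec]
    rw [hinv, hw]
    have hsum : ∀ (p : Fin n → ℝ) (q : Unit → ℝ) (p' : Fin n → ℝ) (q' : Unit → ℝ),
        Sum.elim p q ⬝ᵥ Sum.elim p' q' = p ⬝ᵥ p' + q ⬝ᵥ q' := by
      intro p q p' q'
      simp [dotProduct, Fintype.sum_sum_type]
    rw [hsum]
    have : x ⬝ᵥ (A⁻¹ *ᵥ x - z • (A⁻¹ *ᵥ v)) = x ⬝ᵥ (A⁻¹ *ᵥ x) - z * c := by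
      rw [dotProduct_sub, dotProduct_smul, smul_eq_mul, ← hc]
    rw [this]
    simp only [dotProduct, Finset.univ_unique, Finset.sum_singleton]
    rw [hz]
    field_simp
    ring
  -- conclude
  have hterm : ∀ i, (Sum.elim (a i) (fun _ => b i)) ⬝ᵥ (B⁻¹ *ᵥ (Sum.elim (a i) (fun _ => b i)))
      = a i ⬝ᵥ (A⁻¹ *ᵥ a i) + s⁻¹ * (a i ⬝ᵥ (A⁻¹ *ᵥ v) - b i)^2 := fun i => key (a i) (b i)
  have hsinv : s⁻¹ < 0 := inv_lt_zero.mpr hschur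
  constructor
  · rw [htR, htRf]
    apply Finset.sum_le_sum
    intro i _
    rw [hterm i]
    nlinarith [sq_nonneg (a i ⬝ᵥ (A⁻¹ *ᵥ v) - b i)]
  · rintro ⟨i, hi⟩
    rw [htR, htRf]
    apply Finset.sum_lt_sum
    · intro j _
      rw [hterm j]
      nlinarith [sq_nonneg (a j ⬝ᵥ (A⁻¹ *ᵥ v) - b j)]
    · refine ⟨i, Finset.mem_univ i, ?_⟩
      rw [hterm i]
      have hd : (a i ⬝ᵥ (A⁻¹ *ᵥ v) - b i) ≠ 0 := sub_ne_zero.mpr hi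
      have hp : 0 < (a i ⬝ᵥ (A⁻¹ *ᵥ v) - b i)^2 := by positivity
      have := mul_neg_of_neg_of_pos hsinv hp
      linarith
end

section
/- Let Y ∈ ℝ^m, let X be an m×p real matrix with XᵀX invertible, H = X (XᵀX)⁻¹ Xᵀ, let T be an m×q real matrix with Q = Tᵀ(I − H)T invertible and M = Q⁻¹, and let U = [X T] with Ŷ_U = U (UᵀU)⁻¹ Uᵀ Y and Ŷ_X = H Y. Then the residual sums of squares satisfy (Y − Ŷ_U)ᵀ(Y − Ŷ_U) = (Y − Ŷ_X)ᵀ(Y − Ŷ_X) − Yᵀ (I − H) T M Tᵀ (I − H) Y. -/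
open Matrix

lemma proj_sse (n : ℕ) (P : Matrix (Fin n) (Fin n) ℝ) (hs : Pᵀ = P) (hi : P * P = P)
    (Y : Fin n → ℝ) :
    (Y - P *ᵥ Y) ⬝ᵥ (Y - P *ᵥ Y) = Y ⬝ᵥ Y - Y ⬝ᵥ (P *ᵥ Y) := by
  have h1 : (P *ᵥ Y) ⬝ᵥ Y = Y ⬝ᵥ (P *ᵥ Y) := dotProduct_comm _ _
  have hYP : Y ᵥ* P = P *ᵥ Y := by
    calc Y ᵥ* P = Y ᵥ* Pᵀ := by rw [hs]
      _ = P *ᵥ Y := Matrix.vecMul_transpose ..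
  have h2 : (P *ᵥ Y) ⬝ᵥ (P *ᵥ Y) = Y ⬝ᵥ (P *ᵥ Y) := by
    calc (P *ᵥ Y) ⬝ᵥ (P *ᵥ Y) = (Y ᵥ* P) ⬝ᵥ (P *ᵥ Y) := by rw [hYP]
      _ = Y ⬝ᵥ (P *ᵥ (P *ᵥ Y)) := (Matrix.dotProduct_mulVec Y P (P *ᵥ Y)).symm
      _ = Y ⬝ᵥ (P *ᵥ Y) := by rw [Matrix.mulVec_mulVec, hi]
  simp only [sub_dotProduct, dotProduct_sub, h1, h2]
  ring

theorem sse_decomposition (m p q : ℕ)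
    (Y : Fin m → ℝ)
    (X : Matrix (Fin m) (Fin p) ℝ) (hX : IsUnit (Xᵀ * X).det)
    (H : Matrix (Fin m) (Fin m) ℝ) (hH : H = X * (Xᵀ * X)⁻¹ * Xᵀ)
    (T : Matrix (Fin m) (Fin q) ℝ)
    (hQ : IsUnit (Tᵀ * (1 - H) * T).det)
    (M : Matrix (Fin q) (Fin q) ℝ) (hM : M = (Tᵀ * (1 - H) * T)⁻¹)
    (U : Matrix (Fin m) (Fin p ⊕ Fin q) ℝ) (hU : U = fromCols X T)
    (YhatU YhatX : Fin m → ℝ)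
    (hYU : YhatU = (U * (Uᵀ * U)⁻¹ * Uᵀ) *ᵥ Y)
    (hYX : YhatX = H *ᵥ Y) :
    (Y - YhatU) ⬝ᵥ (Y - YhatU)
      = (Y - YhatX) ⬝ᵥ (Y - YhatX)
        - Y ⬝ᵥ (((1 - H) * T * M * Tᵀ * (1 - H)) *ᵥ Y) := by
  -- invertibility setup
  haveI iA : Invertible (Xᵀ * X) := Matrix.invertibleOfIsUnitDet _ hX
  have hAeq : ⅟(Xᵀ * X) = (Xᵀ * X)⁻¹ := Matrix.invOf_eq_nonsing_inv _
  have hSchur : Tᵀ * T - Tᵀ * X * ⅟(Xᵀ * X) * (Xᵀ * T) = Tᵀ * (1 - H) * T := by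
    rw [hAeq, hH]
    simp only [Matrix.mul_sub, Matrix.sub_mul, Matrix.mul_one, Matrix.one_mul,
      Matrix.mul_assoc]
  haveI iS : Invertible (Tᵀ * T - Tᵀ * X * ⅟(Xᵀ * X) * (Xᵀ * T)) := by
    rw [hSchur]; exact Matrix.invertibleOfIsUnitDet _ hQ
  have hMeq : ⅟(Tᵀ * T - Tᵀ * X * ⅟(Xᵀ * X) * (Xᵀ * T)) = M := by
    rw [Matrix.invOf_eq_nonsing_inv, hSchur, ← hM]
  have hUU : Uᵀ * U = fromBlocks (Xᵀ * X) (Xᵀ * T) (Tᵀ * X) (Tᵀ * T) := by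
    rw [hU, transpose_fromCols, fromRows_mul_fromCols]
  haveI iB : Invertible (fromBlocks (Xᵀ * X) (Xᵀ * T) (Tᵀ * X) (Tᵀ * T)) :=
    Matrix.fromBlocks₁₁Invertible _ _ _ _
  haveI iUU : Invertible (Uᵀ * U) := by rw [hUU]; infer_instance
  have hunit : IsUnit (Uᵀ * U).det := Matrix.isUnit_det_of_invertible _
  -- explicit inverse of UᵀU
  have hWinv : (Uᵀ * U)⁻¹ =
      fromBlocks ((Xᵀ * X)⁻¹ + (Xᵀ * X)⁻¹ * (Xᵀ * T) * M * (Tᵀ * X) * (Xᵀ * X)⁻¹)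
        (-((Xᵀ * X)⁻¹ * (Xᵀ * T) * M)) (-(M * (Tᵀ * X) * (Xᵀ * X)⁻¹)) M := by
    rw [hUU, ← Matrix.invOf_eq_nonsing_inv, Matrix.invOf_fromBlocks₁₁_eq, hMeq, hAeq]
  -- the projection equals H + G
  have hP : U * (Uᵀ * U)⁻¹ * Uᵀ = H + (1 - H) * T * M * Tᵀ * (1 - H) := by
    rw [hWinv, hU, transpose_fromCols, fromCols_mul_fromBlocks,
      fromCols_mul_fromRows, hH]
    simp only [Matrix.mul_sub, Matrix.sub_mul, Matrix.mul_add, Matrix.add_mul,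
      Matrix.mul_neg, Matrix.neg_mul, Matrix.mul_one, Matrix.one_mul, Matrix.mul_assoc]
    abel
  -- symmetry and idempotence of the big projector
  have hUUt : (Uᵀ * U)ᵀ = Uᵀ * U := by rw [Matrix.transpose_mul, Matrix.transpose_transpose]
  have hWt : ((Uᵀ * U)⁻¹)ᵀ = (Uᵀ * U)⁻¹ := by
    rw [Matrix.transpose_nonsing_inv, hUUt]
  have hPt : (U * (Uᵀ * U)⁻¹ * Uᵀ)ᵀ = U * (Uᵀ * U)⁻¹ * Uᵀ := by
    simp only [Matrix.transpose_mul, Matrix.transpose_transpose, hWt, Matrix.mul_assoc]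
  have hcanU : Uᵀ * (U * ((Uᵀ * U)⁻¹ * Uᵀ)) = Uᵀ := by
    calc Uᵀ * (U * ((Uᵀ * U)⁻¹ * Uᵀ)) = (Uᵀ * U) * (Uᵀ * U)⁻¹ * Uᵀ := by
          simp only [Matrix.mul_assoc]
      _ = Uᵀ := by rw [Matrix.mul_nonsing_inv _ hunit, Matrix.one_mul]
  have hPP : (U * (Uᵀ * U)⁻¹ * Uᵀ) * (U * (Uᵀ * U)⁻¹ * Uᵀ) = U * (Uᵀ * U)⁻¹ * Uᵀ := by
    calc (U * (Uᵀ * U)⁻¹ * Uᵀ) * (U * (Uᵀ * U)⁻¹ * Uᵀ)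
        = U * ((Uᵀ * U)⁻¹ * (Uᵀ * (U * ((Uᵀ * U)⁻¹ * Uᵀ)))) := by
          simp only [Matrix.mul_assoc]
      _ = U * (Uᵀ * U)⁻¹ * Uᵀ := by rw [hcanU, Matrix.mul_assoc]
  -- symmetry and idempotence of H
  have hAt : ((Xᵀ * X)⁻¹)ᵀ = (Xᵀ * X)⁻¹ := by
    rw [Matrix.transpose_nonsing_inv, Matrix.transpose_mul, Matrix.transpose_transpose]
  have hHt : Hᵀ = H := by
    rw [hH]
    simp only [Matrix.transpose_mul, Matrix.transpose_transpose, hAt, Matrix.mul_assoc]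
  have hHH : H * H = H := by
    rw [hH]
    calc X * (Xᵀ * X)⁻¹ * Xᵀ * (X * (Xᵀ * X)⁻¹ * Xᵀ)
        = X * ((Xᵀ * X)⁻¹ * (Xᵀ * X) * ((Xᵀ * X)⁻¹ * Xᵀ)) := by
          simp only [Matrix.mul_assoc]
      _ = X * (Xᵀ * X)⁻¹ * Xᵀ := by
          rw [Matrix.nonsing_inv_mul _ hX, Matrix.one_mul, Matrix.mul_assoc]
  -- put it together
  rw [hYU, hYX, proj_sse m _ hPt hPP Y, proj_sse m H hHt hHH Y, hP,
    Matrix.add_mulVec, dotProduct_add]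
  ring
end

section
/- Let Y ∈ ℝ^m, let X be an m×p real matrix with XᵀX invertible, H = X (XᵀX)⁻¹ Xᵀ, let T be an m×q real matrix such that M = (TᵀT − TᵀX(XᵀX)⁻¹XᵀT)⁻¹ exists, and let U = [X T] be the m×(p+q) horizontal concatenation of X and T. Let MSE_X = (1/m)·(Y − HY)ᵀ(Y − HY) and MSE_U = (1/m)·(Y − U(UᵀU)⁻¹UᵀY)ᵀ(Y − U(UᵀU)⁻¹UᵀY) be the mean squared errors of the least-squares regressions of Y on X and on U respectively. Then MSE_U ≤ MSE_X. -/
open Matrix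

theorem mse_le_of_adding_features (m p q : ℕ)
    (Y : Fin m → ℝ)
    (X : Matrix (Fin m) (Fin p) ℝ) (hX : IsUnit (Xᵀ * X).det)
    (H : Matrix (Fin m) (Fin m) ℝ) (hH : H = X * (Xᵀ * X)⁻¹ * Xᵀ)
    (T : Matrix (Fin m) (Fin q) ℝ)
    (hQ : IsUnit (Tᵀ * T - Tᵀ * X * (Xᵀ * X)⁻¹ * Xᵀ * T).det)
    (U : Matrix (Fin m) (Fin p ⊕ Fin q) ℝ) (hU : U = fromCols X T)
    (MSE_X MSE_U : ℝ)
    (hMSEX : MSE_X = (1 / (m : ℝ)) * ((Y - H *ᵥ Y) ⬝ᵥ (Y - H *ᵥ Y)))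
    (hMSEU : MSE_U = (1 / (m : ℝ)) *
      ((Y - (U * (Uᵀ * U)⁻¹ * Uᵀ) *ᵥ Y) ⬝ᵥ (Y - (U * (Uᵀ * U)⁻¹ * Uᵀ) *ᵥ Y))) :
    MSE_U ≤ MSE_X := by
  haveI iA : Invertible (Xᵀ * X) := invertibleOfIsUnitDet _ hX
  set S : Matrix (Fin q) (Fin q) ℝ := Tᵀ * T - Tᵀ * X * (Xᵀ * X)⁻¹ * Xᵀ * T with hS
  set W : Matrix (Fin m) (Fin q) ℝ := T - H * T with hW
  have hinvA : (Xᵀ * X)⁻¹ * (Xᵀ * X) = 1 := nonsing_inv_mul _ hX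
  have hAinv : (Xᵀ * X) * (Xᵀ * X)⁻¹ = 1 := mul_nonsing_inv _ hX
  have hHsym : Hᵀ = H := by
    rw [hH, transpose_mul, transpose_mul, transpose_transpose, transpose_nonsing_inv,
      transpose_mul, transpose_transpose, Matrix.mul_assoc]
  have hHH : H * H = H := by
    rw [hH]
    calc X * (Xᵀ * X)⁻¹ * Xᵀ * (X * (Xᵀ * X)⁻¹ * Xᵀ)
        = X * (((Xᵀ * X)⁻¹ * (Xᵀ * X)) * ((Xᵀ * X)⁻¹ * Xᵀ)) := by
          simp only [Matrix.mul_assoc]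
      _ = X * (Xᵀ * X)⁻¹ * Xᵀ := by rw [hinvA, Matrix.one_mul, Matrix.mul_assoc]
  have hWt : Wᵀ = Tᵀ - Tᵀ * H := by rw [hW, transpose_sub, transpose_mul, hHsym]
  have hWtH : Wᵀ * H = 0 := by
    rw [hWt, Matrix.sub_mul, Matrix.mul_assoc, hHH, sub_self]
  have hSWW : S = Wᵀ * W := by
    rw [hWt, hW, hS, hH]
    simp only [Matrix.mul_sub, Matrix.sub_mul, Matrix.mul_assoc]
    rw [show Xᵀ * (X * ((Xᵀ * X)⁻¹ * (Xᵀ * T))) = Xᵀ * T by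
      rw [← Matrix.mul_assoc, ← Matrix.mul_assoc, hAinv, Matrix.one_mul]]
    abel
  haveI iS : Invertible S := invertibleOfIsUnitDet _ hQ
  have hSinv : S * S⁻¹ = 1 := mul_nonsing_inv _ hQ
  haveI iS' : Invertible (Tᵀ * T - Tᵀ * X * ⅟(Xᵀ * X) * (Xᵀ * T)) := by
    rw [invOf_eq_nonsing_inv, ← Matrix.mul_assoc]
    exact iS
  have hUU : Uᵀ * U = fromBlocks (Xᵀ * X) (Xᵀ * T) (Tᵀ * X) (Tᵀ * T) := by
    rw [hU, transpose_fromCols, fromRows_mul_fromCols]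
  haveI iB : Invertible (fromBlocks (Xᵀ * X) (Xᵀ * T) (Tᵀ * X) (Tᵀ * T)) :=
    fromBlocks₁₁Invertible _ _ _ _
  have hSb : Tᵀ * T - Tᵀ * X * (Xᵀ * X)⁻¹ * (Xᵀ * T) = S := by
    rw [hS, Matrix.mul_assoc (Tᵀ * X * (Xᵀ * X)⁻¹) Xᵀ T]
  have hinv : (Uᵀ * U)⁻¹ = fromBlocks
      ((Xᵀ * X)⁻¹ + (Xᵀ * X)⁻¹ * (Xᵀ * T) * S⁻¹ * (Tᵀ * X) * (Xᵀ * X)⁻¹)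
      (-((Xᵀ * X)⁻¹ * (Xᵀ * T) * S⁻¹))
      (-(S⁻¹ * (Tᵀ * X) * (Xᵀ * X)⁻¹)) (S⁻¹) := by
    rw [hUU, ← invOf_eq_nonsing_inv, invOf_fromBlocks₁₁_eq]
    simp only [invOf_eq_nonsing_inv, ← Matrix.mul_assoc, hSb]
    rfl
  have hHu : U * (Uᵀ * U)⁻¹ * Uᵀ = H + W * S⁻¹ * Wᵀ := by
    rw [hinv, hU, transpose_fromCols, fromCols_mul_fromBlocks,
      fromCols_mul_fromRows, hWt, hW, hH]
    simp only [Matrix.mul_add, Matrix.add_mul, Matrix.mul_sub, Matrix.sub_mul,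
      Matrix.mul_neg, Matrix.neg_mul, Matrix.mul_assoc]
    abel
  set r : Fin m → ℝ := Y - H *ᵥ Y with hr
  set u : Fin q → ℝ := S⁻¹ *ᵥ (Wᵀ *ᵥ Y) with hu
  have hres : Y - (U * (Uᵀ * U)⁻¹ * Uᵀ) *ᵥ Y = r - W *ᵥ u := by
    rw [hHu, Matrix.add_mulVec, hr, hu]
    rw [show (W * S⁻¹ * Wᵀ) *ᵥ Y = W *ᵥ (S⁻¹ *ᵥ (Wᵀ *ᵥ Y)) by
      simp only [Matrix.mulVec_mulVec, Matrix.mul_assoc]]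
    abel
  have hWtr : Wᵀ *ᵥ r = Wᵀ *ᵥ Y := by
    rw [hr, Matrix.mulVec_sub, Matrix.mulVec_mulVec, hWtH, Matrix.zero_mulVec, sub_zero]
  have hSu : S *ᵥ u = Wᵀ *ᵥ Y := by
    rw [hu, Matrix.mulVec_mulVec, hSinv, Matrix.one_mulVec]
  have hrWu : r ⬝ᵥ (W *ᵥ u) = (W *ᵥ u) ⬝ᵥ (W *ᵥ u) := by
    rw [dotProduct_mulVec, ← Matrix.mulVec_transpose, hWtr, ← hSu, hSWW,
      ← Matrix.mulVec_mulVec, dotProduct_comm, dotProduct_mulVec,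
      ← Matrix.mulVec_transpose, transpose_transpose]
  have hc : (0:ℝ) ≤ (W *ᵥ u) ⬝ᵥ (W *ᵥ u) := by
    simp only [dotProduct]
    exact Finset.sum_nonneg fun i _ => mul_self_nonneg _
  have hkey : (r - W *ᵥ u) ⬝ᵥ (r - W *ᵥ u) = r ⬝ᵥ r - (W *ᵥ u) ⬝ᵥ (W *ᵥ u) := by
    simp only [sub_dotProduct, dotProduct_sub]
    rw [hrWu, dotProduct_comm (W *ᵥ u) r, hrWu]
    ring
  rw [hMSEU, hMSEX, hres, hkey]
  have hm : (0:ℝ) ≤ 1 / (m:ℝ) := by positivity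
  have : r ⬝ᵥ r - (W *ᵥ u) ⬝ᵥ (W *ᵥ u) ≤ r ⬝ᵥ r := by linarith
  exact mul_le_mul_of_nonneg_left this hm
end
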